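/- Let F_q be a finite field with q elements and let P ∈ F_q[x_1,…,x_n] be a polynomial that vanishes on all of F_q^n with multiplicity M (i.e., mult(P, a) ≥ M for every a ∈ F_q^n). If deg(P) < Mq, then P is the zero polynomial. -/

import Mathlib

open MvPolynomial

/-- The β-th Hasse derivative of a multivariate polynomial `P`: the coefficient of `y^β`
in `P(x + y)`, where the outer variables are `y` and the coefficients are polynomials in `x`. -/
noncomputable def hasseDeriv {F : Type*} [CommRing F] {n : ℕ}
    (β : Fin n →₀ ℕ) (P : MvPolynomial (Fin n) F) : MvPolynomial (Fin n) F :=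
  MvPolynomial.coeff β
    (MvPolynomial.eval₂ ((MvPolynomial.C).comp (MvPolynomial.C))
      (fun i => MvPolynomial.C (MvPolynomial.X i) + MvPolynomial.X i) P)

/-- The multiplicity of `P` at a point `a`: the largest `M` such that all Hasse derivatives of
order `< M` vanish at `a` (`∞` if no largest such `M` exists). -/
noncomputable def mult {F : Type*} [CommRing F] {n : ℕ}
    (P : MvPolynomial (Fin n) F) (a : Fin n → F) : ℕ∞ :=
  sSup {M : ℕ∞ | ∀ β : Fin n →₀ ℕ, ((∑ i, β i : ℕ) : ℕ∞) < M →
    MvPolynomial.eval a (hasseDeriv β P) = 0}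

namespace SZAux

variable {F : Type*} [CommRing F] {n : ℕ}

/-- Translation `P(x) ↦ P(a + x)`. -/
noncomputable def transl (a : Fin n → F) :
    MvPolynomial (Fin n) F →ₐ[F] MvPolynomial (Fin n) F :=
  aeval fun i => C (a i) + X i

@[simp] lemma transl_C (a : Fin n → F) (c : F) : transl a (C c) = C c := by
  simp [transl, algebraMap_eq]

@[simp] lemma transl_X (a : Fin n → F) (i : Fin n) : transl a (X i) = C (a i) + X i := by
  simp [transl]

lemma eval_hasseDeriv (a : Fin n → F) (β : Fin n →₀ ℕ) (P : MvPolynomial (Fin n) F) :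
    eval a (hasseDeriv β P) = coeff β (transl a P) := by
  have key : MvPolynomial.map (eval a)
      (MvPolynomial.eval₂ ((MvPolynomial.C).comp (MvPolynomial.C))
        (fun i => MvPolynomial.C (MvPolynomial.X i) + MvPolynomial.X i) P) = transl a P := by
    induction P using MvPolynomial.induction_on with
    | C c => simp
    | add p q hp hq => simp [eval₂_add, hp, hq]
    | mul_X p i hp => simp [eval₂_mul, hp]
  rw [hasseDeriv, ← key, coeff_map]

/-- Apply `coeff β` to each coefficient of a univariate polynomial over `MvPolynomial`. -/
noncomputable def coeffMap (β : Fin n →₀ ℕ) (g : Polynomial (MvPolynomial (Fin n) F)) :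
    Polynomial F :=
  ⟨.ofCoeff (g.toFinsupp.coeff.mapRange (coeff β) (coeff_zero β))⟩

@[simp] lemma coeffMap_coeff (β : Fin n →₀ ℕ) (g : Polynomial (MvPolynomial (Fin n) F)) (j : ℕ) :
    (coeffMap β g).coeff j = coeff β (g.coeff j) := by
  rcases g with ⟨g⟩
  simp [coeffMap, Polynomial.coeff_ofFinsupp, Polynomial.coeff]

lemma coeffMap_add (β : Fin n →₀ ℕ) (g h : Polynomial (MvPolynomial (Fin n) F)) :
    coeffMap β (g + h) = coeffMap β g + coeffMap β h := by
  ext j; simp [Polynomial.coeff_add, MvPolynomial.coeff_add]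

lemma coeffMap_monomial (β : Fin n →₀ ℕ) (j : ℕ) (c : MvPolynomial (Fin n) F) :
    coeffMap β (Polynomial.monomial j c) = Polynomial.monomial j (coeff β c) := by
  ext k
  simp only [coeffMap_coeff, Polynomial.coeff_monomial, apply_ite (coeff β), coeff_zero]

lemma eval_hasseDeriv_coeffMap (β : Fin n →₀ ℕ) (b : F) (k : ℕ)
    (g : Polynomial (MvPolynomial (Fin n) F)) :
    Polynomial.eval b (Polynomial.hasseDeriv k (coeffMap β g)) =
      coeff β (Polynomial.eval (C b) (Polynomial.hasseDeriv k g)) := by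
  induction g using Polynomial.induction_on' with
  | add p q hp hq => simp [coeffMap_add, hp, hq]
  | monomial j c =>
    rw [coeffMap_monomial, Polynomial.hasseDeriv_monomial, Polynomial.hasseDeriv_monomial,
      Polynomial.eval_monomial, Polynomial.eval_monomial]
    have h1 : ((j.choose k : MvPolynomial (Fin n) F) * c) * (C b) ^ (j - k)
        = C ((j.choose k : F) * b ^ (j - k)) * c := by
      rw [show ((j.choose k : MvPolynomial (Fin n) F)) = C ((j.choose k : F)) by rfl]
      rw [map_mul, map_pow]; ring
    rw [h1, coeff_C_mul]
    ring

lemma finSuccEquiv_transl (b : F) (a : Fin n → F) (P : MvPolynomial (Fin (n + 1)) F) :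
    finSuccEquiv F n (transl (Fin.cons b a) P) =
      Polynomial.taylor (C b)
        (Polynomial.map (transl a : MvPolynomial (Fin n) F →+* MvPolynomial (Fin n) F)
          (finSuccEquiv F n P)) := by
  induction P using MvPolynomial.induction_on with
  | C c =>
    simp [finSuccEquiv_apply, Polynomial.taylor_C]
  | add p q hp hq => simp [hp, hq, Polynomial.taylor_mul]
  | mul_X p i hp =>
    rw [map_mul, map_mul, map_mul, Polynomial.map_mul]
    have htm : ∀ u v : Polynomial (MvPolynomial (Fin n) F),
        Polynomial.taylor (C b) (u * v) =
          Polynomial.taylor (C b) u * Polynomial.taylor (C b) v := Polynomial.taylor_mul _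
    rw [htm, hp]
    refine congrArg (HMul.hMul _) ?_
    refine Fin.cases ?_ (fun j => ?_) i
    · rw [transl_X]
      simp [Fin.cons_zero, finSuccEquiv_X_zero, map_add, finSuccEquiv_apply,
        Polynomial.taylor_X, Polynomial.taylor_C, add_comm]
    · rw [transl_X]
      simp [Fin.cons_succ, finSuccEquiv_X_succ, map_add, finSuccEquiv_apply,
        Polynomial.taylor_C]

/-- The core induction: if all translated coefficients of low order vanish and the total degree
is less than `M * q`, the polynomial is zero. -/
lemma main_aux {F : Type*} [Field F] [Fintype F] :
    ∀ (n : ℕ) (P : MvPolynomial (Fin n) F) (M : ℕ),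
      (∀ (a : Fin n → F) (β : Fin n →₀ ℕ), (∑ i, β i) < M → coeff β (transl a P) = 0) →
      P.totalDegree < M * Fintype.card F → P = 0 := by
  intro n
  induction n with
  | zero =>
    intro P M hV hdeg
    have hM : 0 < M := by
      rcases Nat.eq_zero_or_pos M with h | h
      · simp [h] at hdeg
      · exact h
    have hc := hV (fun i => i.elim0) 0 (by simpa using hM)
    rw [eq_C_of_isEmpty P] at hc ⊢
    rw [transl_C, coeff_C] at hc
    simpa using hc
  | succ n ih =>
    intro P M hV hdeg
    by_contra hP
    set q := Fintype.card F with hqdef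
    have hq0 : 0 < q := Fintype.card_pos
    set f := finSuccEquiv F n P with hf_def
    have hf : f ≠ 0 := by
      intro h
      apply hP
      have h2 := congrArg (finSuccEquiv F n).symm h
      simpa [hf_def] using h2
    set t := f.natDegree with ht_def
    have hPt : f.coeff t ≠ 0 := by
      rw [ht_def, Polynomial.coeff_natDegree]
      exact Polynomial.leadingCoeff_ne_zero.mpr hf
    have hdegc : (f.coeff t).totalDegree + t ≤ P.totalDegree := by
      rw [hf_def] at hPt ⊢
      exact totalDegree_coeff_finSuccEquiv_add_le P t hPt
    have ht_lt : t < M * q := lt_of_le_of_lt (le_trans (Nat.le_add_left _ _) hdegc) hdeg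
    set u := t / q with hu_def
    have huq : u * q ≤ t := Nat.div_mul_le_self t q
    have htq : u < M := (Nat.div_lt_iff_lt_mul hq0).mpr ht_lt
    apply hPt
    apply ih (f.coeff t) (M - u)
    · -- vanishing hypothesis for the leading coefficient
      intro a β hβ
      set s := ∑ i, β i with hs_def
      set m := M - s with hm_def
      set w := coeffMap β
        (Polynomial.map (transl a : MvPolynomial (Fin n) F →+* MvPolynomial (Fin n) F) f)
        with hw_def
      have hwcoeff : ∀ j, w.coeff j = coeff β (transl a (f.coeff j)) := by
        intro j; simp [hw_def, Polynomial.coeff_map]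
      have hkey : ∀ (bb : F) (k : ℕ), k + s < M →
          Polynomial.eval bb (Polynomial.hasseDeriv k w) = 0 := by
        intro bb k hk
        rw [hw_def, eval_hasseDeriv_coeffMap, ← Polynomial.taylor_coeff, hf_def,
          ← finSuccEquiv_transl, finSuccEquiv_coeff_coeff]
        apply hV (Fin.cons bb a) (β.cons k)
        rw [Fin.sum_univ_succ]
        simpa [Finsupp.cons_zero, Finsupp.cons_succ, ← hs_def] using hk
      have hdvd : ∀ bb : F, (Polynomial.X - Polynomial.C bb) ^ m ∣ w := by
        intro bb
        rw [Polynomial.X_sub_C_pow_dvd_iff, Polynomial.X_pow_dvd_iff]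
        intro d hd
        rw [← Polynomial.taylor_apply, Polynomial.taylor_coeff]
        exact hkey bb d (by omega)
      have hprod : (∏ bb : F, (Polynomial.X - Polynomial.C bb) ^ m) ∣ w :=
        Fintype.prod_dvd_of_coprime
          (fun b c hbc =>
            (Polynomial.pairwise_coprime_X_sub_C Function.injective_id hbc).pow)
          (fun bb => hdvd bb)
      have hw0 : w = 0 := by
        by_contra hw
        have hmono := Polynomial.natDegree_le_of_dvd hprod hw
        have hdegprod : (∏ bb : F, (Polynomial.X - Polynomial.C bb) ^ m).natDegree = q * m := by
          rw [Polynomial.natDegree_prod]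
          · simp [Polynomial.natDegree_pow, Polynomial.natDegree_X_sub_C, hqdef,
              Finset.card_univ, mul_comm]
          · intro bb _; exact pow_ne_zero _ (Polynomial.X_sub_C_ne_zero bb)
        have hwt : w.natDegree ≤ t := by
          apply Polynomial.natDegree_le_iff_coeff_eq_zero.mpr
          intro j hj
          rw [hwcoeff, Polynomial.coeff_eq_zero_of_natDegree_lt (by omega)]
          simp
        rw [hdegprod] at hmono
        have h2 : q * m ≤ t := le_trans hmono hwt
        have h3 : m ≤ u := (Nat.le_div_iff_mul_le hq0).mpr (by rwa [mul_comm] at h2)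
        omega
      rw [← hwcoeff t, hw0]
      simp
    · -- degree bound
      have h5 : (f.coeff t).totalDegree + t < M * q := lt_of_le_of_lt hdegc hdeg
      calc (f.coeff t).totalDegree < M * q - t := by omega
        _ ≤ M * q - u * q := Nat.sub_le_sub_left huq _
        _ = (M - u) * q := by rw [Nat.sub_mul]

end SZAux

/-- Consequence of the strengthened Schwartz–Zippel lemma: if `P` vanishes on all of `F_q^n`
with multiplicity `M` and `deg(P) < Mq`, then `P` is the zero polynomial. -/
theorem eq_zero_of_vanishing_everywhere_with_multiplicity {F : Type*} [Field F] [Fintype F]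
    (q : ℕ) (hq : Fintype.card F = q) {n : ℕ}
    (P : MvPolynomial (Fin n) F) (M : ℕ)
    (hmult : ∀ a : Fin n → F, (M : ℕ∞) ≤ mult P a)
    (hdeg : P.totalDegree < M * q) :
    P = 0 := by
  subst hq
  apply SZAux.main_aux n P M _ hdeg
  intro a β hβ
  rw [← SZAux.eval_hasseDeriv]
  have h1 : ((∑ i, β i : ℕ) : ℕ∞) < mult P a :=
    lt_of_lt_of_le (by exact_mod_cast hβ) (hmult a)
  rw [mult] at h1
  obtain ⟨S, hS, hltS⟩ := lt_sSup_iff.mp h1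
  exact hS β hltS
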